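/- For any real m×p matrix A, the inverse of the principal square root of I_p + AᵀA equals I_p − Aᵀ [ (I_m + AAᵀ)^{1/2} ( I_m + (I_m + AAᵀ)^{1/2} ) ]⁻¹ A. -/

import Mathlib

open Matrix

section

open scoped ComplexOrder

/-- The positive semidefinite square root of a positive semidefinite matrix
(the definition `Matrix.PosSemidef.sqrt` of the older Mathlib, since removed). -/
noncomputable def Matrix.PosSemidef.sqrt {n 𝕜 : Type*} [Fintype n] [DecidableEq n] [RCLike 𝕜]
    {A : Matrix n n 𝕜} (hA : A.PosSemidef) : Matrix n n 𝕜 :=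
  hA.1.eigenvectorUnitary.1 * diagonal ((↑) ∘ (√·) ∘ hA.1.eigenvalues) *
  (star hA.1.eigenvectorUnitary : Matrix n n 𝕜)

end

theorem Matrix.PosSemidef.posSemidef_sqrt {n : ℕ} {A : Matrix (Fin n) (Fin n) ℝ}
    (hA : A.PosSemidef) : hA.sqrt.PosSemidef := by
  have hD : (diagonal (RCLike.ofReal ∘ (√·) ∘ hA.1.eigenvalues : Fin n → ℝ)).PosSemidef :=
    posSemidef_diagonal_iff.mpr fun i => by simp [Real.sqrt_nonneg]
  have := hD.mul_mul_conjTranspose_same (hA.1.eigenvectorUnitary : Matrix (Fin n) (Fin n) ℝ)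
  rw [Matrix.PosSemidef.sqrt, Matrix.star_eq_conjTranspose]
  exact this

theorem Matrix.PosSemidef.sqrt_mul_self {n : ℕ} {A : Matrix (Fin n) (Fin n) ℝ}
    (hA : A.PosSemidef) : hA.sqrt * hA.sqrt = A := by
  have hU : (star hA.1.eigenvectorUnitary : Matrix (Fin n) (Fin n) ℝ) *
      (hA.1.eigenvectorUnitary : Matrix (Fin n) (Fin n) ℝ) = 1 :=
    Unitary.coe_star_mul_self _
  have hDD : diagonal (RCLike.ofReal ∘ (√·) ∘ hA.1.eigenvalues : Fin n → ℝ) *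
      diagonal (RCLike.ofReal ∘ (√·) ∘ hA.1.eigenvalues : Fin n → ℝ) =
      diagonal (RCLike.ofReal ∘ hA.1.eigenvalues) := by
    rw [diagonal_mul_diagonal]
    congr 1
    funext i
    simp [Real.mul_self_sqrt (hA.eigenvalues_nonneg i)]
  conv_rhs => rw [hA.1.spectral_theorem, Unitary.conjStarAlgAut_apply]
  rw [Matrix.PosSemidef.sqrt]
  simp only [Matrix.mul_assoc]
  rw [← Matrix.mul_assoc _ _ (diagonal _ * _), hU, Matrix.one_mul, ← Matrix.mul_assoc (diagonal _),
    hDD]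

private lemma psd_trace_nonneg' {n : ℕ} {M : Matrix (Fin n) (Fin n) ℝ} (h : M.PosSemidef) :
    0 ≤ M.trace := by
  refine Finset.sum_nonneg fun j _ => ?_
  have := h.dotProduct_mulVec_nonneg (Pi.single j 1)
  simpa [dotProduct, mulVec, Pi.single_apply] using this

private lemma diag_quad' {n k : ℕ} (C : Matrix (Fin n) (Fin n) ℝ) (X : Matrix (Fin n) (Fin k) ℝ)
    (j : Fin k) :
    (Xᵀ * (C * X)) j j = (fun i => X i j) ⬝ᵥ (C *ᵥ fun i => X i j) := by
  simp [mul_apply, dotProduct, mulVec, Finset.mul_sum]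

private lemma intertwine' {m p : ℕ} (A : Matrix (Fin m) (Fin p) ℝ)
    (h1 : (1 + Aᵀ * A).PosSemidef) (h2 : (1 + A * Aᵀ).PosSemidef) :
    A * h1.sqrt = h2.sqrt * A := by
  set B := h1.sqrt with hBdef
  set C := h2.sqrt with hCdef
  have hBpsd : B.PosSemidef := h1.posSemidef_sqrt
  have hCpsd : C.PosSemidef := h2.posSemidef_sqrt
  have hBB : B * B = 1 + Aᵀ * A := h1.sqrt_mul_self
  have hCC : C * C = 1 + A * Aᵀ := h2.sqrt_mul_self
  set X := A * B - C * A with hXdef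
  have hCX : C * X = -(X * B) := by
    have e1 : C * X + X * B = A * (B * B) - C * (C * A) := by
      simp only [hXdef, Matrix.mul_sub, Matrix.sub_mul, Matrix.mul_assoc]
      abel
    have e2 : A * (B * B) - C * (C * A) = 0 := by
      rw [hBB, ← Matrix.mul_assoc, hCC]
      simp only [Matrix.mul_add, Matrix.add_mul, Matrix.mul_one, Matrix.one_mul,
        Matrix.mul_assoc]
      abel
    exact eq_neg_of_add_eq_zero_left (e1.trans e2)
  -- trace argument: X = 0
  have hP : (Xᵀ * (C * X)).PosSemidef := by
    have := hCpsd.conjTranspose_mul_mul_same X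
    rwa [conjTranspose_eq_transpose_of_trivial, Matrix.mul_assoc] at this
  have hQ : (X * B * Xᵀ).PosSemidef := by
    have := hBpsd.mul_mul_conjTranspose_same X
    rwa [conjTranspose_eq_transpose_of_trivial] at this
  have htr0 : (Xᵀ * (C * X)).trace = 0 := by
    have h1t : 0 ≤ (Xᵀ * (C * X)).trace := psd_trace_nonneg' hP
    have h2t : (Xᵀ * (C * X)).trace = -((X * B * Xᵀ).trace) := by
      rw [hCX, Matrix.mul_neg, trace_neg, trace_mul_comm, Matrix.mul_assoc]
    have h3t : 0 ≤ (X * B * Xᵀ).trace := psd_trace_nonneg' hQ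
    linarith
  -- positive definiteness facts
  have hAApsd : (A * Aᵀ).PosSemidef := by
    have := Matrix.posSemidef_self_mul_conjTranspose A
    rwa [conjTranspose_eq_transpose_of_trivial] at this
  have h2pd : (1 + A * Aᵀ).PosDef := Matrix.PosDef.add_posSemidef Matrix.PosDef.one hAApsd
  have hCdet : IsUnit C.det := by
    have hd : C.det * C.det = (1 + A * Aᵀ).det := by rw [← det_mul, hCC]
    have hpos := h2pd.det_pos
    refine isUnit_iff_ne_zero.mpr fun h0 => ?_
    rw [h0, mul_zero] at hd
    linarith [hd ▸ hpos]
  have hdiag0 : ∀ j, (Xᵀ * (C * X)) j j = 0 := by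
    intro j
    have hnn : ∀ j' ∈ Finset.univ, 0 ≤ (Xᵀ * (C * X)) j' j' := by
      intro j' _
      have := hP.dotProduct_mulVec_nonneg (Pi.single j' 1)
      simpa [dotProduct, mulVec, Pi.single_apply] using this
    exact (Finset.sum_eq_zero_iff_of_nonneg hnn).mp htr0 j (Finset.mem_univ j)
  have hX0 : X = 0 := by
    ext i j
    have hq : (fun i => X i j) ⬝ᵥ (C *ᵥ fun i => X i j) = 0 := by
      rw [← diag_quad']; exact hdiag0 j
    have hmv : C *ᵥ (fun i => X i j) = 0 := by
      have := (hCpsd.dotProduct_mulVec_zero_iff (fun i => X i j)).mp (by simpa using hq)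
      exact this
    have hinj := Matrix.mulVec_injective_iff_isUnit.mpr
      ((Matrix.isUnit_iff_isUnit_det C).mpr hCdet) (a₁ := fun i => X i j) (a₂ := 0)
    have : (fun i => X i j) = 0 := hinj (by simp [hmv])
    exact congrFun this i
  have := sub_eq_zero.mp hX0
  exact this

/-- Woodbury-like identity for the inverse matrix square root: for any real `m × p` matrix `A`,
the inverse of the principal square root of `I_p + AᵀA` equals
`I_p − Aᵀ [ (I_m + AAᵀ)^{1/2} ( I_m + (I_m + AAᵀ)^{1/2} ) ]⁻¹ A`. -/
theorem inv_sqrt_one_add_transpose_mul (m p : ℕ) (A : Matrix (Fin m) (Fin p) ℝ)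
    (h1 : (1 + Aᵀ * A).PosSemidef) (h2 : (1 + A * Aᵀ).PosSemidef) :
    h1.sqrt⁻¹ = 1 - Aᵀ * (h2.sqrt * (1 + h2.sqrt))⁻¹ * A := by
  set B := h1.sqrt with hBdef
  set C := h2.sqrt with hCdef
  have hBpsd : B.PosSemidef := h1.posSemidef_sqrt
  have hCpsd : C.PosSemidef := h2.posSemidef_sqrt
  have hBB : B * B = 1 + Aᵀ * A := h1.sqrt_mul_self
  have hitw : A * B = C * A := intertwine' A h1 h2
  have hBsym : Bᵀ = B := by
    have := hBpsd.isHermitian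
    rwa [IsHermitian, conjTranspose_eq_transpose_of_trivial] at this
  have hCsym : Cᵀ = C := by
    have := hCpsd.isHermitian
    rwa [IsHermitian, conjTranspose_eq_transpose_of_trivial] at this
  have hBA : B * Aᵀ = Aᵀ * C := by
    have := congrArg Matrix.transpose hitw
    rw [transpose_mul, transpose_mul, hBsym, hCsym] at this
    exact this
  -- determinants / invertibility
  have h1Cpd : (1 + C).PosDef := Matrix.PosDef.add_posSemidef Matrix.PosDef.one hCpsd
  have h1Bpd : (1 + B).PosDef := Matrix.PosDef.add_posSemidef Matrix.PosDef.one hBpsd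
  have hAApsd : (A * Aᵀ).PosSemidef := by
    have := Matrix.posSemidef_self_mul_conjTranspose A
    rwa [conjTranspose_eq_transpose_of_trivial] at this
  have h2pd : (1 + A * Aᵀ).PosDef := Matrix.PosDef.add_posSemidef Matrix.PosDef.one hAApsd
  have hCdet : IsUnit C.det := by
    have hd : C.det * C.det = (1 + A * Aᵀ).det := by rw [← det_mul, h2.sqrt_mul_self]
    have hpos := h2pd.det_pos
    refine isUnit_iff_ne_zero.mpr fun h0 => ?_
    rw [h0, mul_zero] at hd
    linarith [hd ▸ hpos]
  have h1Cdet : IsUnit (1 + C).det := isUnit_iff_ne_zero.mpr (ne_of_gt h1Cpd.det_pos)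
  have h1Bdet : IsUnit (1 + B).det := isUnit_iff_ne_zero.mpr (ne_of_gt h1Bpd.det_pos)
  have hMdet : IsUnit (C * (1 + C)).det := by rw [det_mul]; exact hCdet.mul h1Cdet
  -- C * M⁻¹ = (1+C)⁻¹
  have hCM : C * (C * (1 + C))⁻¹ = (1 + C)⁻¹ := by
    have h : (1 + C) * (C * (C * (1 + C))⁻¹) = 1 := by
      rw [← Matrix.mul_assoc]
      have comm : (1 + C) * C = C * (1 + C) := by
        rw [Matrix.add_mul, Matrix.mul_add, Matrix.one_mul, Matrix.mul_one]
      rw [comm, Matrix.mul_nonsing_inv _ hMdet]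
    exact (Matrix.inv_eq_right_inv h).symm
  -- (1+C)⁻¹ A = A (1+B)⁻¹
  have key : A * (1 + B) = (1 + C) * A := by
    rw [Matrix.mul_add, Matrix.add_mul, Matrix.mul_one, Matrix.one_mul, hitw]
  have h4 : (1 + C) * (A * (1 + B)⁻¹) = A := by
    rw [← Matrix.mul_assoc, ← key, Matrix.mul_assoc, Matrix.mul_nonsing_inv _ h1Bdet,
      Matrix.mul_one]
  have hA1C : (1 + C)⁻¹ * A = A * (1 + B)⁻¹ := by
    conv_lhs => rw [← h4]
    rw [← Matrix.mul_assoc, Matrix.nonsing_inv_mul _ h1Cdet, Matrix.one_mul]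
  -- Aᵀ (1+C)⁻¹ A = B - 1
  have hAtA : Aᵀ * A = B * B - 1 := by rw [hBB]; abel
  have hfinal : Aᵀ * ((1 + C)⁻¹ * A) = B - 1 := by
    rw [hA1C, ← Matrix.mul_assoc, hAtA]
    have : (B * B - 1 : Matrix (Fin p) (Fin p) ℝ) = (B - 1) * (1 + B) := by
      rw [Matrix.sub_mul, Matrix.mul_add, Matrix.one_mul, Matrix.mul_one]
      abel
    rw [this, Matrix.mul_assoc, Matrix.mul_nonsing_inv _ h1Bdet, Matrix.mul_one]
  -- finish
  apply Matrix.inv_eq_right_inv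
  have expand : B * (1 - Aᵀ * (C * (1 + C))⁻¹ * A)
      = B - Aᵀ * ((1 + C)⁻¹ * A) := by
    rw [Matrix.mul_sub, Matrix.mul_one]
    congr 1
    rw [← Matrix.mul_assoc, ← Matrix.mul_assoc, hBA, Matrix.mul_assoc, Matrix.mul_assoc]
    rw [← Matrix.mul_assoc C, hCM]
  rw [expand, hfinal]
  abel
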